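/- arXiv:2409.11247 — 8 statements merged into one kernel-verified Lean document; each statement's English description precedes it below -/
import Mathlib

section
/- Let H be a real Hilbert space, let A, B, E, S : H → H be continuous linear maps, and let N > 0 be real. Assume the algebraic Riccati equation E∘A + A*∘E − E∘B∘B*∘E + N·id = 0 and, with M := A − B∘B*∘E, the Lyapunov equation M∘S + S∘M* = B∘B*. Assume there are constants C > 0 and ν > 0 such that ‖exp(tM)‖ ≤ C e^{−νt} and ‖exp(tM*)‖ ≤ C e^{−νt} for all t ≥ 0. Then there exists a constant K > 0, depending only on C, ‖E‖ and ‖S‖, such that for every T > 0 and every pair of differentiable functions ỹ, p̃ : ℝ → H satisfying ỹ'(t) = A ỹ(t) − B(B* p̃(t)) and p̃'(t) = −A* p̃(t) − N·ỹ(t) for all t ∈ [0, T], one has, for every t ∈ [0, T], ‖ỹ(t)‖ + ‖p̃(t)‖ ≤ K (‖ỹ(0)‖ + ‖p̃(0)‖) e^{−νt} + K (‖ỹ(T)‖ + ‖p̃(T)‖) e^{−ν(T−t)}. (Exponential turnpike estimate: the extremal pair stays exponentially close to the steady optimal pair except near t = 0 and t = T.) -/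
open ContinuousLinearMap

variable {H : Type*} [NormedAddCommGroup H] [InnerProductSpace ℝ H] [CompleteSpace H]

private lemma my_sandwich (M' D M : H →L[ℝ] H) (h : M' * D + D * M = 0) (t : ℝ) :
    NormedSpace.exp (t • M') * D * NormedSpace.exp (t • M) = D := by
  set f : ℝ → (H →L[ℝ] H) :=
    fun t => NormedSpace.exp (t • M') * D * NormedSpace.exp (t • M) with hf
  have hder : ∀ s : ℝ, HasDerivAt f 0 s := by
    intro s
    have h1 := (hasDerivAt_exp_smul_const (𝕂 := ℝ) M' s).mul_const D
    have h2 := hasDerivAt_exp_smul_const' (𝕂 := ℝ) M s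
    have h3 := h1.mul h2
    have e : NormedSpace.exp (s • M') * M' * D * NormedSpace.exp (s • M)
        + NormedSpace.exp (s • M') * D * (M * NormedSpace.exp (s • M))
        = NormedSpace.exp (s • M') * (M' * D + D * M) * NormedSpace.exp (s • M) := by
      noncomm_ring
    rw [h, mul_zero, zero_mul] at e
    rw [e] at h3
    exact h3
  have hconst := is_const_of_deriv_eq_zero (𝕜 := ℝ) (f := f)
    (fun s => (hder s).differentiableAt) (fun s => (hder s).deriv) t 0
  simpa [hf] using hconst

private lemma my_ode_rep (W : H →L[ℝ] H) {T : ℝ} (z : ℝ → H)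
    (hz : ∀ t ∈ Set.Icc (0:ℝ) T, HasDerivAt z (W (z t)) t) :
    ∀ t ∈ Set.Icc (0:ℝ) T, z t = NormedSpace.exp (t • W) (z 0) := by
  set g : ℝ → H := fun t => NormedSpace.exp ((-t) • W) (z t) with hg
  have hexp : ∀ s : ℝ, HasDerivAt (fun u : ℝ => NormedSpace.exp ((-u) • W))
      (-(NormedSpace.exp ((-s) • W) * W)) s := by
    intro s
    have h1 := hasDerivAt_exp_smul_const (𝕂 := ℝ) W (-s)
    have h2 : HasDerivAt (fun u : ℝ => -u) (-1 : ℝ) s := (hasDerivAt_id s).neg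
    have h3 := h1.scomp s h2
    simpa [Function.comp_def, neg_smul] using h3
  have hder : ∀ s ∈ Set.Icc (0:ℝ) T, HasDerivAt g 0 s := by
    intro s hs
    have h3 := (hexp s).clm_apply (hz s hs)
    have e : (-(NormedSpace.exp ((-s) • W) * W)) (z s)
        + (NormedSpace.exp ((-s) • W)) (W (z s)) = 0 := by
      simp [ContinuousLinearMap.mul_apply]
    rw [e] at h3
    exact h3
  have hconst := constant_of_has_deriv_right_zero (f := g) (a := 0) (b := T)
    (fun s hs => ((hder s hs).continuousAt).continuousWithinAt)
    (fun s hs => ((hder s (Set.mem_Icc_of_Ico hs)).hasDerivWithinAt))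
  intro t ht
  have h0 : g 0 = z 0 := by simp [hg]
  have h : g t = z 0 := (hconst t ht).trans h0
  have hmul : NormedSpace.exp (t • W) * NormedSpace.exp ((-t) • W) = 1 := by
    letI : NormedAlgebra ℚ (H →L[ℝ] H) := NormedAlgebra.restrictScalars ℚ ℝ (H →L[ℝ] H)
    rw [neg_smul, ← NormedSpace.exp_add_of_commute ((Commute.refl (t • W)).neg_right)]
    simp
  have h2 := congrArg (fun L : H →L[ℝ] H => L (z t)) hmul
  simp only [ContinuousLinearMap.mul_apply, ContinuousLinearMap.one_apply] at h2
  rw [show NormedSpace.exp ((-t) • W) (z t) = g t from rfl, h] at h2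
  exact h2.symm

set_option synthInstance.maxHeartbeats 1000000 in
private lemma my_comm (a b : ℝ) (W : H →L[ℝ] H) : Commute (a • W) (b • W) := by
  unfold Commute SemiconjBy
  rw [smul_mul_assoc, mul_smul_comm, smul_mul_assoc, mul_smul_comm, smul_smul, smul_smul,
    mul_comm a b]

set_option maxHeartbeats 1000000 in
private lemma my_selfadj (A B E : H →L[ℝ] H) (N : ℝ)
    (hRic : E ∘L A + adjoint A ∘L E - E ∘L B ∘L adjoint B ∘L E
        + N • (1 : H →L[ℝ] H) = 0)
    (C ν : ℝ) (hC : 0 < C) (hν : 0 < ν)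
    (hM : ∀ t : ℝ, 0 ≤ t →
      ‖NormedSpace.exp (t • (A - B ∘L adjoint B ∘L E))‖ ≤ C * Real.exp (-ν * t))
    (hMstar : ∀ t : ℝ, 0 ≤ t →
      ‖NormedSpace.exp (t • adjoint (A - B ∘L adjoint B ∘L E))‖ ≤ C * Real.exp (-ν * t)) :
    adjoint E = E := by
  have hone : adjoint (1 : H →L[ℝ] H) = 1 := by
    rw [ContinuousLinearMap.one_def, adjoint_id]
  have key : adjoint (A - B ∘L adjoint B ∘L E) * (adjoint E - E)
      + (adjoint E - E) * (A - B ∘L adjoint B ∘L E)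
      = adjoint (E ∘L A + adjoint A ∘L E - E ∘L B ∘L adjoint B ∘L E
            + N • (1 : H →L[ℝ] H))
        - (E ∘L A + adjoint A ∘L E - E ∘L B ∘L adjoint B ∘L E
            + N • (1 : H →L[ℝ] H)) := by
    simp only [map_add, map_sub, map_smul, adjoint_comp, adjoint_adjoint, hone]
    simp only [← ContinuousLinearMap.mul_def]
    noncomm_ring
  rw [hRic, map_zero, sub_zero] at key
  set D := adjoint E - E with hD
  have hsub : D = 0 := by
    set t0 : ℝ := |Real.log C| / ν + 1 with ht0def
    have ht0 : 0 ≤ t0 := by positivity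
    have hs := my_sandwich _ _ _ key t0
    have hb : ‖D‖ ≤ (C * Real.exp (-ν * t0)) * ‖D‖ * (C * Real.exp (-ν * t0)) := by
      calc ‖D‖ = ‖NormedSpace.exp (t0 • adjoint (A - B ∘L adjoint B ∘L E)) * D
            * NormedSpace.exp (t0 • (A - B ∘L adjoint B ∘L E))‖ := by rw [hs]
        _ ≤ ‖NormedSpace.exp (t0 • adjoint (A - B ∘L adjoint B ∘L E))‖ * ‖D‖
            * ‖NormedSpace.exp (t0 • (A - B ∘L adjoint B ∘L E))‖ :=
          le_trans (norm_mul_le _ _) (by gcongr; exact norm_mul_le _ _)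
        _ ≤ _ := by gcongr <;> [exact hMstar t0 ht0; exact hM t0 ht0]
    have hlt : C * Real.exp (-ν * t0) < 1 := by
      have h1 : -ν * t0 < -Real.log C := by
        have hlog : Real.log C ≤ |Real.log C| := le_abs_self _
        have he : ν * t0 = |Real.log C| + ν := by
          rw [ht0def]; field_simp
        nlinarith
      have h2 : Real.exp (-ν * t0) < Real.exp (-Real.log C) := Real.exp_lt_exp.2 h1
      have h3 : Real.exp (-Real.log C) = C⁻¹ := by
        rw [Real.exp_neg, Real.exp_log hC]
      calc C * Real.exp (-ν * t0) < C * C⁻¹ := by rw [← h3]; exact (mul_lt_mul_iff_right₀ hC).2 h2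
        _ = 1 := mul_inv_cancel₀ (ne_of_gt hC)
    have hnn : 0 ≤ C * Real.exp (-ν * t0) := by positivity
    have habs : ∀ x c : ℝ, 0 ≤ x → 0 ≤ c → c < 1 → x ≤ c * x * c → x = 0 := by
      intro x c hx hc h1 h2
      by_contra hne
      have hx' : 0 < x := lt_of_le_of_ne hx (Ne.symm hne)
      have e1 : c * x * c ≤ c * x * 1 := mul_le_mul_of_nonneg_left h1.le (mul_nonneg hc hx)
      have e2 : c * x < 1 * x := mul_lt_mul_of_pos_right h1 hx'
      linarith
    exact norm_eq_zero.1 (habs _ _ (norm_nonneg D) hnn hlt hb)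
  exact sub_eq_zero.1 hsub


set_option maxHeartbeats 2000000 in
/-- Exponential turnpike estimate: if `E` solves the algebraic Riccati equation, `S` the
Lyapunov equation, and the semigroups generated by `M := A − B B* E` and `M*` decay like
`C e^{−νt}`, then there is `K > 0` such that every solution of the Hamiltonian system on
`[0, T]` satisfies
`‖ỹ(t)‖ + ‖p̃(t)‖ ≤ K(‖ỹ(0)‖ + ‖p̃(0)‖)e^{−νt} + K(‖ỹ(T)‖ + ‖p̃(T)‖)e^{−ν(T−t)}`. -/
theorem stmt3 (A B E S : H →L[ℝ] H) (N : ℝ) (hN : 0 < N)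
    (hRic : E ∘L A + adjoint A ∘L E - E ∘L B ∘L adjoint B ∘L E
        + N • (1 : H →L[ℝ] H) = 0)
    (hLyap : (A - B ∘L adjoint B ∘L E) ∘L S
        + S ∘L adjoint (A - B ∘L adjoint B ∘L E) = B ∘L adjoint B)
    (C ν : ℝ) (hC : 0 < C) (hν : 0 < ν)
    (hM : ∀ t : ℝ, 0 ≤ t →
      ‖NormedSpace.exp (t • (A - B ∘L adjoint B ∘L E))‖ ≤ C * Real.exp (-ν * t))
    (hMstar : ∀ t : ℝ, 0 ≤ t →
      ‖NormedSpace.exp (t • adjoint (A - B ∘L adjoint B ∘L E))‖ ≤ C * Real.exp (-ν * t)) :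
    ∃ K : ℝ, 0 < K ∧ ∀ T : ℝ, 0 < T → ∀ ytil ptil : ℝ → H,
      (∀ t ∈ Set.Icc (0:ℝ) T,
        HasDerivAt ytil (A (ytil t) - B (adjoint B (ptil t))) t) →
      (∀ t ∈ Set.Icc (0:ℝ) T,
        HasDerivAt ptil (-(adjoint A (ptil t)) - N • ytil t) t) →
      ∀ t ∈ Set.Icc (0:ℝ) T,
        ‖ytil t‖ + ‖ptil t‖ ≤
          K * (‖ytil 0‖ + ‖ptil 0‖) * Real.exp (-ν * t) +
            K * (‖ytil T‖ + ‖ptil T‖) * Real.exp (-ν * (T - t)) := by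
  have hEsa : adjoint E = E := my_selfadj A B E N hRic C ν hC hν hM hMstar
  refine ⟨(C + 1) * (1 + ‖E‖) * (1 + (1 + ‖E‖) * (1 + ‖S‖)), by positivity, ?_⟩
  intro T hT ytil ptil hy hp t ht
  set M : H →L[ℝ] H := A - B ∘L adjoint B ∘L E with hMdef
  have hMadjApp : ∀ v : H, adjoint M v = adjoint A v - E (B (adjoint B v)) := by
    intro v
    rw [hMdef]
    simp [map_sub, adjoint_comp, adjoint_adjoint, hEsa, comp_apply, sub_apply]
  have hMApp : ∀ v : H, M v = A v - B (adjoint B (E v)) := by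
    intro v; rw [hMdef]; simp [sub_apply, comp_apply]
  have hRicApp : ∀ v : H,
      E (A v) + adjoint A (E v) - E (B (adjoint B (E v))) + N • v = 0 := by
    intro v
    have h := congrArg (fun f : H →L[ℝ] H => f v) hRic
    simpa [add_apply, sub_apply, comp_apply, smul_apply, one_apply, zero_apply] using h
  have hLyapApp : ∀ v : H, M (S v) + S (adjoint M v) = B (adjoint B v) := by
    intro v
    have h := congrArg (fun f : H →L[ℝ] H => f v) hLyap
    simpa [add_apply, comp_apply] using h
  set q : ℝ → H := fun s => ptil s - E (ytil s) with hqdef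
  set z : ℝ → H := fun s => ytil s - S (q s) with hzdef
  have hdq : ∀ s ∈ Set.Icc (0:ℝ) T, HasDerivAt q ((-(adjoint M)) (q s)) s := by
    intro s hs
    have h1 := (hp s hs).sub ((E.hasFDerivAt).comp_hasDerivAt s (hy s hs))
    have heq : (-(adjoint A (ptil s)) - N • ytil s) - E (A (ytil s) - B (adjoint B (ptil s)))
        = (-(adjoint M)) (q s) := by
      have h0 := hRicApp (ytil s)
      simp only [hqdef, neg_apply, hMadjApp, map_sub, map_smul]
      linear_combination (norm := module) -h0
    exact heq ▸ h1
  have hdz : ∀ s ∈ Set.Icc (0:ℝ) T, HasDerivAt z (M (z s)) s := by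
    intro s hs
    have h1 := (hy s hs).sub ((S.hasFDerivAt).comp_hasDerivAt s (hdq s hs))
    have heq : (A (ytil s) - B (adjoint B (ptil s))) - S ((-(adjoint M)) (q s))
        = M (z s) := by
      have h2 := hLyapApp (q s)
      simp only [hqdef, hzdef, neg_apply, hMadjApp, hMApp, map_sub, map_neg, map_smul] at h2 ⊢
      linear_combination (norm := module) h2
    exact heq ▸ h1
  have hTmem : T ∈ Set.Icc (0:ℝ) T := ⟨hT.le, le_refl T⟩
  have hzrep := my_ode_rep M z hdz t ht
  have hqrep_t := my_ode_rep (-(adjoint M)) q hdq t ht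
  have hqrep_T := my_ode_rep (-(adjoint M)) q hdq T hTmem
  have hqT : q t = NormedSpace.exp ((T - t) • adjoint M) (q T) := by
    rw [hqrep_T, hqrep_t, ← ContinuousLinearMap.mul_apply]
    have hmul : NormedSpace.exp ((T - t) • adjoint M)
        * NormedSpace.exp (T • -adjoint M) = NormedSpace.exp (t • -adjoint M) := by
      letI : NormedAlgebra ℚ (H →L[ℝ] H) := NormedAlgebra.restrictScalars ℚ ℝ (H →L[ℝ] H)
      rw [smul_neg, ← neg_smul, smul_neg, ← neg_smul,
        ← NormedSpace.exp_add_of_commute (my_comm (T - t) (-T) (adjoint M))]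
      congr 1
      module
    rw [hmul]
  have hqbound : ‖q t‖ ≤ C * Real.exp (-ν * (T - t)) * ‖q T‖ := by
    rw [hqT]
    calc ‖NormedSpace.exp ((T - t) • adjoint M) (q T)‖
        ≤ ‖NormedSpace.exp ((T - t) • adjoint M)‖ * ‖q T‖ := le_opNorm _ _
      _ ≤ C * Real.exp (-ν * (T - t)) * ‖q T‖ :=
        mul_le_mul_of_nonneg_right (hMstar _ (sub_nonneg.2 ht.2)) (norm_nonneg _)
  have hzbound : ‖z t‖ ≤ C * Real.exp (-ν * t) * ‖z 0‖ := by
    rw [hzrep]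
    calc ‖NormedSpace.exp (t • M) (z 0)‖
        ≤ ‖NormedSpace.exp (t • M)‖ * ‖z 0‖ := le_opNorm _ _
      _ ≤ C * Real.exp (-ν * t) * ‖z 0‖ :=
        mul_le_mul_of_nonneg_right (hM _ ht.1) (norm_nonneg _)
  -- norm arithmetic
  have ha : (0:ℝ) ≤ ‖E‖ := norm_nonneg E
  have hb : (0:ℝ) ≤ ‖S‖ := norm_nonneg S
  have hq0b : ‖q 0‖ ≤ (1 + ‖E‖) * (‖ytil 0‖ + ‖ptil 0‖) := by
    have e : q 0 = ptil 0 - E (ytil 0) := by rw [hqdef]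
    have h1 : ‖ptil 0 - E (ytil 0)‖ ≤ ‖ptil 0‖ + ‖E (ytil 0)‖ := norm_sub_le _ _
    have h2 : ‖E (ytil 0)‖ ≤ ‖E‖ * ‖ytil 0‖ := le_opNorm _ _
    rw [e]
    nlinarith [norm_nonneg (ytil 0), norm_nonneg (ptil 0)]
  have hqTb : ‖q T‖ ≤ (1 + ‖E‖) * (‖ytil T‖ + ‖ptil T‖) := by
    have e : q T = ptil T - E (ytil T) := by rw [hqdef]
    have h1 : ‖ptil T - E (ytil T)‖ ≤ ‖ptil T‖ + ‖E (ytil T)‖ := norm_sub_le _ _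
    have h2 : ‖E (ytil T)‖ ≤ ‖E‖ * ‖ytil T‖ := le_opNorm _ _
    rw [e]
    nlinarith [norm_nonneg (ytil T), norm_nonneg (ptil T)]
  have hz0b : ‖z 0‖ ≤ (1 + (1 + ‖E‖) * (1 + ‖S‖)) * (‖ytil 0‖ + ‖ptil 0‖) := by
    have e : z 0 = ytil 0 - S (q 0) := by rw [hzdef]
    have h1 : ‖ytil 0 - S (q 0)‖ ≤ ‖ytil 0‖ + ‖S (q 0)‖ := norm_sub_le _ _
    have h2 : ‖S (q 0)‖ ≤ ‖S‖ * ‖q 0‖ := le_opNorm _ _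
    have h3 := mul_le_mul_of_nonneg_left hq0b hb
    rw [e]
    nlinarith [norm_nonneg (ytil 0), norm_nonneg (ptil 0)]
  have hyt : ‖ytil t‖ ≤ ‖z t‖ + ‖S‖ * ‖q t‖ := by
    have e : ytil t = z t + S (q t) := by rw [hzdef]; simp
    rw [e]
    have h1 : ‖z t + S (q t)‖ ≤ ‖z t‖ + ‖S (q t)‖ := norm_add_le _ _
    have h2 : ‖S (q t)‖ ≤ ‖S‖ * ‖q t‖ := le_opNorm _ _
    linarith
  have hpt : ‖ptil t‖ ≤ ‖q t‖ + ‖E‖ * ‖ytil t‖ := by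
    have e : ptil t = q t + E (ytil t) := by rw [hqdef]; simp
    rw [e]
    have h1 : ‖q t + E (ytil t)‖ ≤ ‖q t‖ + ‖E (ytil t)‖ := norm_add_le _ _
    have h2 : ‖E (ytil t)‖ ≤ ‖E‖ * ‖ytil t‖ := le_opNorm _ _
    linarith
  set a := ‖E‖
  set b := ‖S‖
  set Y0 := ‖ytil 0‖ + ‖ptil 0‖ with hY0def
  set YT := ‖ytil T‖ + ‖ptil T‖ with hYTdef
  set e0 := Real.exp (-ν * t) with he0def
  set eT := Real.exp (-ν * (T - t)) with heTdef
  have hY0 : 0 ≤ Y0 := by rw [hY0def]; positivity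
  have hYT : 0 ≤ YT := by rw [hYTdef]; positivity
  have he0 : 0 < e0 := Real.exp_pos _
  have heT : 0 < eT := Real.exp_pos _
  have c1 : ‖q t‖ ≤ C * eT * ((1 + a) * YT) :=
    hqbound.trans (mul_le_mul_of_nonneg_left hqTb (by positivity))
  have c2 : ‖z t‖ ≤ C * e0 * ((1 + (1 + a) * (1 + b)) * Y0) :=
    hzbound.trans (mul_le_mul_of_nonneg_left hz0b (by positivity))
  have step1 : ‖ytil t‖ + ‖ptil t‖ ≤ (1 + a) * ‖z t‖ + (1 + (1 + a) * b) * ‖q t‖ := by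
    have h5 := mul_le_mul_of_nonneg_left hyt ha
    nlinarith [norm_nonneg (q t), norm_nonneg (z t)]
  have step2 : (1 + a) * ‖z t‖ ≤ (1 + a) * (C * e0 * ((1 + (1 + a) * (1 + b)) * Y0)) :=
    mul_le_mul_of_nonneg_left c2 (by positivity)
  have step3 : (1 + (1 + a) * b) * ‖q t‖
      ≤ (1 + (1 + a) * b) * (C * eT * ((1 + a) * YT)) :=
    mul_le_mul_of_nonneg_left c1 (by positivity)
  set K := (C + 1) * (1 + a) * (1 + (1 + a) * (1 + b)) with hKdef
  have step4 : (1 + a) * (C * e0 * ((1 + (1 + a) * (1 + b)) * Y0)) ≤ K * Y0 * e0 := by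
    have hcoef : (1 + a) * C * (1 + (1 + a) * (1 + b)) ≤ K := by
      rw [hKdef]
      nlinarith [mul_nonneg ha hb, mul_nonneg (mul_nonneg ha ha) hb, mul_nonneg ha ha]
    calc (1 + a) * (C * e0 * ((1 + (1 + a) * (1 + b)) * Y0))
        = ((1 + a) * C * (1 + (1 + a) * (1 + b))) * Y0 * e0 := by ring
      _ ≤ K * Y0 * e0 :=
        mul_le_mul_of_nonneg_right (mul_le_mul_of_nonneg_right hcoef hY0) he0.le
  have step5 : (1 + (1 + a) * b) * (C * eT * ((1 + a) * YT)) ≤ K * YT * eT := by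
    have hcoef : (1 + (1 + a) * b) * C * (1 + a) ≤ K := by
      rw [hKdef]
      nlinarith [mul_nonneg ha hb, mul_nonneg (mul_nonneg ha ha) hb, mul_nonneg ha ha,
        mul_nonneg (mul_nonneg hC.le ha) hb, mul_nonneg hC.le ha, mul_nonneg hC.le hb,
        mul_nonneg (mul_nonneg (mul_nonneg hC.le ha) ha) hb,
        mul_nonneg (mul_nonneg hC.le ha) ha]
    calc (1 + (1 + a) * b) * (C * eT * ((1 + a) * YT))
        = ((1 + (1 + a) * b) * C * (1 + a)) * YT * eT := by ring
      _ ≤ K * YT * eT :=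
        mul_le_mul_of_nonneg_right (mul_le_mul_of_nonneg_right hcoef hYT) heT.le
  linarith [step1, step2, step3, step4, step5]
end

section
/- Let H be a real Hilbert space, let A, B : H → H be continuous linear maps, let N be a real constant, and let E : H → H be a continuous linear map that is self-adjoint (E* = E) and satisfies the algebraic Riccati equation E∘A + A*∘E − E∘B∘B*∘E + N·id = 0. Let y : ℝ → H be differentiable with y'(t) = (A − B∘B*∘E)(y(t)) for all t. Then the function t ↦ ⟨E y(t), y(t)⟩ is differentiable with derivative (d/dt)⟨E y(t), y(t)⟩ = −( N‖y(t)‖² + ‖B*(E y(t))‖² ) for every t. In particular, if E is positive definite and N > 0, then V(y) = ⟨E y, y⟩ is a Lyapunov function that is strictly decreasing along every nonzero trajectory of the closed-loop system y' = (A − B B* E) y. -/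
open ContinuousLinearMap
open scoped RealInnerProductSpace

variable {H : Type*} [NormedAddCommGroup H] [InnerProductSpace ℝ H] [CompleteSpace H]

/-- If the self-adjoint operator `E` solves the algebraic Riccati equation, then along any
trajectory of the closed-loop system `y' = (A − B B* E) y` the quadratic form `⟨E y, y⟩`
has derivative `−(N‖y‖² + ‖B*(E y)‖²)`; in particular, if `E` is positive definite and
`N > 0`, then `V(y) = ⟨E y, y⟩` is strictly decreasing along every nonzero trajectory. -/
theorem stmt4 (A B E : H →L[ℝ] H) (N : ℝ)
    (hE : adjoint E = E)
    (hRic : E ∘L A + adjoint A ∘L E - E ∘L B ∘L adjoint B ∘L E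
        + N • (1 : H →L[ℝ] H) = 0)
    (y : ℝ → H)
    (hy : ∀ t : ℝ, HasDerivAt y ((A - B ∘L adjoint B ∘L E) (y t)) t) :
    (∀ t : ℝ, HasDerivAt (fun s => ⟪E (y s), y s⟫)
      (-(N * ‖y t‖ ^ 2 + ‖adjoint B (E (y t))‖ ^ 2)) t) ∧
    (0 < N → (∀ x : H, x ≠ 0 → 0 < ⟪E x, x⟫) → (∀ t : ℝ, y t ≠ 0) →
      StrictAnti fun t : ℝ => ⟪E (y t), y t⟫) := by
  have hsym : ∀ u v : H, ⟪E u, v⟫ = ⟪u, E v⟫ := fun u v => by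
    conv_lhs => rw [← hE]
    exact ContinuousLinearMap.adjoint_inner_left E v u
  have key : ∀ t : ℝ, HasDerivAt (fun s => ⟪E (y s), y s⟫)
      (-(N * ‖y t‖ ^ 2 + ‖adjoint B (E (y t))‖ ^ 2)) t := by
    intro t
    have hEy : HasDerivAt (fun s => E (y s)) (E ((A - B ∘L adjoint B ∘L E) (y t))) t :=
      (E.hasFDerivAt.comp_hasDerivAt t (hy t))
    have h : HasDerivAt (fun s => ⟪E (y s), y s⟫) (⟪E (y t), (A - B ∘L adjoint B ∘L E) (y t)⟫
          + ⟪E ((A - B ∘L adjoint B ∘L E) (y t)), y t⟫) t := hEy.inner ℝ (hy t)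
    convert h using 1
    have hric := congrArg (fun (T : H →L[ℝ] H) => ⟪T (y t), y t⟫) hRic
    simp only [ContinuousLinearMap.add_apply, ContinuousLinearMap.sub_apply,
      ContinuousLinearMap.comp_apply, ContinuousLinearMap.smul_apply,
      ContinuousLinearMap.one_apply, ContinuousLinearMap.zero_apply,
      inner_add_left, inner_sub_left, inner_smul_left, inner_zero_left,
      starRingEnd_apply, star_trivial] at hric
    have h1 : ⟪adjoint A (E (y t)), y t⟫ = ⟪E (y t), A (y t)⟫ :=
      ContinuousLinearMap.adjoint_inner_left A _ _
    have h2 : ⟪E (A (y t)), y t⟫ = ⟪A (y t), E (y t)⟫ := hsym _ _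
    have h3 : ⟪E (B (adjoint B (E (y t)))), y t⟫ = ‖adjoint B (E (y t))‖ ^ 2 := by
      rw [hsym, real_inner_comm, (ContinuousLinearMap.adjoint_inner_left B _ _).symm,
        real_inner_self_eq_norm_sq]
    have h4 : ⟪E (y t), B (adjoint B (E (y t)))⟫ = ‖adjoint B (E (y t))‖ ^ 2 := by
      rw [(ContinuousLinearMap.adjoint_inner_left B _ _).symm, real_inner_self_eq_norm_sq]
    have h5 : ⟪y t, y t⟫ = ‖y t‖ ^ 2 := real_inner_self_eq_norm_sq _
    have h6 : ⟪E (y t), A (y t)⟫ = ⟪A (y t), E (y t)⟫ := real_inner_comm _ _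
    simp only [map_sub, ContinuousLinearMap.sub_apply, ContinuousLinearMap.comp_apply,
      inner_sub_left, inner_sub_right]
    rw [h1, h2, h3, h5, h6] at hric
    rw [h3, h4, h2, h6]
    linarith
  refine ⟨key, fun hN hpos hne => ?_⟩
  apply strictAnti_of_deriv_neg
  · intro t
    rw [(key t).deriv]
    have := hpos (y t) (hne t)
    have hy0 : 0 < ‖y t‖ := norm_pos_iff.mpr (hne t)
    nlinarith [sq_nonneg ‖adjoint B (E (y t))‖, mul_pos hN (pow_pos hy0 2)]
end

section
/- Let H be a real Hilbert space, let A, B : H → H be continuous linear maps, let N be a real constant, and let E : H → H be a continuous linear self-adjoint map satisfying the algebraic Riccati equation E∘A + A*∘E − E∘B∘B*∘E + N·id = 0. Let T > 0 and let y : ℝ → H be continuously differentiable with y'(t) = (A − B∘B*∘E)(y(t)) for all t ∈ [0, T]. Then ⟨E y(0), y(0)⟩ − ⟨E y(T), y(T)⟩ = ∫₀^T ( N‖y(t)‖² + ‖B*(E y(t))‖² ) dt. (Integrated Riccati energy identity: the quadratic form ⟨E·,·⟩ evaluated at the initial state equals the accumulated running cost plus the terminal quadratic form.) -/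
open ContinuousLinearMap
open scoped RealInnerProductSpace

variable {H : Type*} [NormedAddCommGroup H] [InnerProductSpace ℝ H] [CompleteSpace H]

/-- Integrated Riccati energy identity: if the self-adjoint operator `E` solves the
algebraic Riccati equation and `y' = (A − B B* E) y` on `[0, T]`, then
`⟨E y(0), y(0)⟩ − ⟨E y(T), y(T)⟩ = ∫₀ᵀ (N‖y(t)‖² + ‖B*(E y(t))‖²) dt`. -/
theorem stmt5 (A B E : H →L[ℝ] H) (N : ℝ)
    (hE : adjoint E = E)
    (hRic : E ∘L A + adjoint A ∘L E - E ∘L B ∘L adjoint B ∘L E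
        + N • (1 : H →L[ℝ] H) = 0)
    (T : ℝ) (hT : 0 < T)
    (y : ℝ → H)
    (hy : ∀ t ∈ Set.Icc (0:ℝ) T,
      HasDerivAt y ((A - B ∘L adjoint B ∘L E) (y t)) t) :
    ⟪E (y 0), y 0⟫ - ⟪E (y T), y T⟫ =
      ∫ t in (0:ℝ)..T, (N * ‖y t‖ ^ 2 + ‖adjoint B (E (y t))‖ ^ 2) := by
  have hIcc : Set.uIcc (0:ℝ) T = Set.Icc 0 T := Set.uIcc_of_le hT.le
  -- derivative of the quadratic form
  have hd : ∀ t ∈ Set.uIcc (0:ℝ) T,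
      HasDerivAt (fun s => ⟪E (y s), y s⟫)
        (-(N * ‖y t‖ ^ 2 + ‖adjoint B (E (y t))‖ ^ 2)) t := by
    intro t ht
    rw [hIcc] at ht
    have hy' := hy t ht
    set x := y t with hx
    set v := (A - B ∘L adjoint B ∘L E) x with hv
    have hEy : HasDerivAt (fun s => E (y s)) (E v) t :=
      E.hasFDerivAt.comp_hasDerivAt t hy'
    have hinner := hEy.inner ℝ hy'
    refine hinner.congr_deriv ?_
    -- algebra
    have hsym : ∀ u w : H, ⟪E u, w⟫ = ⟪u, E w⟫ := fun u w => by
      conv_lhs => rw [← hE]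
      rw [adjoint_inner_left]
    have hric := congrFun (congrArg DFunLike.coe hRic) x
    simp only [add_apply, sub_apply, comp_apply, smul_apply, one_apply, zero_apply] at hric
    have h1 : ⟪E (A x), x⟫ = ⟪E x, A x⟫ := by
      rw [hsym]; exact real_inner_comm _ _
    have h2 : ⟪adjoint A (E x), x⟫ = ⟪E x, A x⟫ := by
      rw [adjoint_inner_left]
    have h3 : ⟪E (B (adjoint B (E x))), x⟫ = ‖adjoint B (E x)‖ ^ 2 := by
      rw [hsym, real_inner_comm, ← adjoint_inner_left]
      exact real_inner_self_eq_norm_sq _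
    have hpair : ⟪(E (A x) + adjoint A (E x) - E (B (adjoint B (E x))) + N • x : H), x⟫ = 0 := by
      rw [show N • x = N • (1 : H →L[ℝ] H) x from rfl, hric]; simp
    rw [inner_add_left, inner_sub_left, inner_add_left, h1, h2, h3,
      real_inner_smul_left, real_inner_self_eq_norm_sq] at hpair
    have hEv : ⟪E x, v⟫ = ⟪E x, A x⟫ - ‖adjoint B (E x)‖ ^ 2 := by
      rw [hv]
      simp only [sub_apply, comp_apply, inner_sub_right]
      congr 1
      rw [← adjoint_inner_left]
      exact real_inner_self_eq_norm_sq _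
    have hvE : ⟪(E v : H), x⟫ = ⟪E x, v⟫ := by
      rw [hsym]; exact real_inner_comm _ _
    rw [hvE, hEv]
    nlinarith [hpair]
  have hcont : ContinuousOn (fun t => -(N * ‖y t‖ ^ 2 + ‖adjoint B (E (y t))‖ ^ 2))
      (Set.uIcc (0:ℝ) T) := by
    have hyc : ContinuousOn y (Set.uIcc (0:ℝ) T) := fun t ht =>
      ((hy t (hIcc ▸ ht)).continuousAt).continuousWithinAt
    fun_prop
  have hint := intervalIntegral.integral_eq_sub_of_hasDerivAt hd
    (hcont.intervalIntegrable)
  rw [intervalIntegral.integral_neg] at hint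
  linarith [hint]
end

section
/- Let H and U be real Hilbert spaces, let A : H → H and B : U → H be continuous linear maps, and let N be a real constant. Let T > 0 and let ỹ, p̃ : ℝ → H be differentiable functions satisfying, for all t ∈ [0, T], ỹ'(t) = A ỹ(t) + B(ṽ(t)) and p̃'(t) = −A* p̃(t) − N·ỹ(t), where ṽ(t) := −B*(p̃(t)). Then N ∫₀^T ‖ỹ(t)‖² dt + ∫₀^T ‖ṽ(t)‖² dt = ⟨ỹ(0), p̃(0)⟩ − ⟨ỹ(T), p̃(T)⟩. -/
open ContinuousLinearMap
open scoped RealInnerProductSpace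

variable {H : Type*} [NormedAddCommGroup H] [InnerProductSpace ℝ H] [CompleteSpace H]
variable {U : Type*} [NormedAddCommGroup U] [InnerProductSpace ℝ U] [CompleteSpace U]

/-- Pairing identity for the deviation variables of the state–adjoint system with
feedback `ṽ = −B* p̃`:
`N ∫₀ᵀ ‖ỹ‖² + ∫₀ᵀ ‖ṽ‖² = ⟨ỹ(0), p̃(0)⟩ − ⟨ỹ(T), p̃(T)⟩`. -/
theorem stmt6 (A : H →L[ℝ] H) (B : U →L[ℝ] H) (N T : ℝ) (hT : 0 < T)
    (ytil ptil : ℝ → H)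
    (hy : ∀ t ∈ Set.Icc (0:ℝ) T,
      HasDerivAt ytil (A (ytil t) + B (-(adjoint B (ptil t)))) t)
    (hp : ∀ t ∈ Set.Icc (0:ℝ) T,
      HasDerivAt ptil (-(adjoint A (ptil t)) - N • ytil t) t) :
    N * (∫ t in (0:ℝ)..T, ‖ytil t‖ ^ 2)
        + (∫ t in (0:ℝ)..T, ‖-(adjoint B (ptil t))‖ ^ 2) =
      ⟪ytil 0, ptil 0⟫ - ⟪ytil T, ptil T⟫ := by
  have hT' : (0:ℝ) ≤ T := hT.le
  set g : ℝ → ℝ := fun t => -(N * ‖ytil t‖ ^ 2 + ‖adjoint B (ptil t)‖ ^ 2) with hg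
  have hderiv : ∀ t ∈ Set.uIcc (0:ℝ) T,
      HasDerivAt (fun t => ⟪ytil t, ptil t⟫) (g t) t := by
    intro t ht
    rw [Set.uIcc_of_le hT'] at ht
    have h1 := (hy t ht).inner ℝ (hp t ht)
    refine h1.congr_deriv ?_
    symm
    simp only [hg, inner_sub_right, inner_add_left, inner_smul_right, inner_neg_right,
      inner_neg_left, adjoint_inner_right, adjoint_inner_left,
      real_inner_self_eq_norm_sq, map_neg]
    rw [← ContinuousLinearMap.adjoint_inner_right B, real_inner_self_eq_norm_sq]
    ring
  have hyc : ContinuousOn ytil (Set.Icc 0 T) := fun t ht =>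
    (hy t ht).continuousAt.continuousWithinAt
  have hpc : ContinuousOn ptil (Set.Icc 0 T) := fun t ht =>
    (hp t ht).continuousAt.continuousWithinAt
  have hi1 : IntervalIntegrable (fun t => ‖ytil t‖ ^ 2) MeasureTheory.volume 0 T := by
    apply ContinuousOn.intervalIntegrable
    rw [Set.uIcc_of_le hT']
    exact (hyc.norm.pow 2)
  have hi2 : IntervalIntegrable (fun t => ‖adjoint B (ptil t)‖ ^ 2)
      MeasureTheory.volume 0 T := by
    apply ContinuousOn.intervalIntegrable
    rw [Set.uIcc_of_le hT']
    exact (((adjoint B).continuous.comp_continuousOn hpc).norm.pow 2)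
  have hgi : IntervalIntegrable g MeasureTheory.volume 0 T :=
    ((hi1.const_mul N).add hi2).neg
  have key := intervalIntegral.integral_eq_sub_of_hasDerivAt hderiv hgi
  have hsplit : (∫ t in (0:ℝ)..T, g t)
      = -(N * (∫ t in (0:ℝ)..T, ‖ytil t‖ ^ 2)
          + (∫ t in (0:ℝ)..T, ‖adjoint B (ptil t)‖ ^ 2)) := by
    rw [hg]
    rw [intervalIntegral.integral_neg, intervalIntegral.integral_add (hi1.const_mul N) hi2,
      intervalIntegral.integral_const_mul]
  simp only [norm_neg]
  rw [hsplit] at key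
  linarith [key]
end

section
/- Let H and U be real Hilbert spaces, let A : H → H and B : U → H be continuous linear maps, and let N > 0 and A₀ > 0 be real constants. Let 0 < T ≤ A₀ and let ỹ, p̃ : ℝ → H be differentiable functions satisfying, for all t ∈ [0, T], ỹ'(t) = A ỹ(t) + B(ṽ(t)) and p̃'(t) = −A* p̃(t) − N·ỹ(t), where ṽ(t) := −B*(p̃(t)). Then ∫₀^T ( ‖ỹ(t)‖ + ‖ṽ(t)‖ ) dt ≤ (1 + 1/√N) · √( A₀ · ( ‖ỹ(0)‖·‖p̃(0)‖ + ‖ỹ(T)‖·‖p̃(T)‖ ) ). In particular, the time-integral of the deviation of the optimal pair from the steady optimal pair is bounded independently of the time horizon T ∈ (0, A₀]. -/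
open ContinuousLinearMap

variable {H : Type*} [NormedAddCommGroup H] [InnerProductSpace ℝ H] [CompleteSpace H]
variable {U : Type*} [NormedAddCommGroup U] [InnerProductSpace ℝ U] [CompleteSpace U]

lemma my_amgm_opt (a b x : ℝ) (ha : 0 ≤ a) (hb : 0 ≤ b)
    (h : ∀ l : ℝ, 0 < l → x ≤ a * l + b / l) : x ≤ 2 * Real.sqrt (a * b) := by
  rcases ha.eq_or_lt with ha0 | ha
  · subst ha0
    simp only [zero_mul, Real.sqrt_zero, mul_zero, zero_add] at h ⊢
    rcases hb.eq_or_lt with hb0 | hb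
    · have := h 1 one_pos; simp [← hb0] at this; linarith
    · by_contra hx
      push_neg at hx
      have h2 := h (2 * b / x) (by positivity)
      have hx' : x ≠ 0 := ne_of_gt hx
      have hb' : b ≠ 0 := ne_of_gt hb
      rw [le_div_iff₀ (by positivity)] at h2
      field_simp at h2
      linarith
  rcases hb.eq_or_lt with hb0 | hb
  · subst hb0
    simp only [mul_zero, Real.sqrt_zero, zero_div, add_zero] at h ⊢
    by_contra hx
    push_neg at hx
    have h2 := h (x / (2 * a)) (by positivity)
    rw [mul_div, le_div_iff₀ (by positivity)] at h2
    nlinarith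
  · have h3 := h (Real.sqrt b / Real.sqrt a) (by positivity)
    have hsa : (0:ℝ) < Real.sqrt a := Real.sqrt_pos.2 ha
    have hsb : (0:ℝ) < Real.sqrt b := Real.sqrt_pos.2 hb
    have h1 : a * (Real.sqrt b / Real.sqrt a) = Real.sqrt a * Real.sqrt b := by
      rw [mul_div_assoc'] ; rw [mul_comm a]
      rw [mul_div_assoc, Real.div_sqrt, mul_comm]
    have h2 : b / (Real.sqrt b / Real.sqrt a) = Real.sqrt a * Real.sqrt b := by
      rw [div_div_eq_mul_div, mul_comm, mul_div_assoc, Real.div_sqrt]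
    rw [h1, h2] at h3
    rw [Real.sqrt_mul ha.le]
    linarith


/-- Integral turnpike estimate: for `0 < T ≤ A₀`, the deviations `ỹ, ṽ = −B* p̃` of the
optimal pair from the steady optimal pair satisfy
`∫₀ᵀ (‖ỹ‖ + ‖ṽ‖) ≤ (1 + 1/√N) √(A₀ (‖ỹ(0)‖‖p̃(0)‖ + ‖ỹ(T)‖‖p̃(T)‖))`,
a bound independent of the time horizon `T ∈ (0, A₀]`. -/
theorem stmt7 (A : H →L[ℝ] H) (B : U →L[ℝ] H) (N A₀ : ℝ) (hN : 0 < N) (hA₀ : 0 < A₀)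
    (T : ℝ) (hT : 0 < T) (hTA : T ≤ A₀)
    (ytil ptil : ℝ → H)
    (hy : ∀ t ∈ Set.Icc (0:ℝ) T,
      HasDerivAt ytil (A (ytil t) + B (-(adjoint B (ptil t)))) t)
    (hp : ∀ t ∈ Set.Icc (0:ℝ) T,
      HasDerivAt ptil (-(adjoint A (ptil t)) - N • ytil t) t) :
    (∫ t in (0:ℝ)..T, (‖ytil t‖ + ‖-(adjoint B (ptil t))‖)) ≤
      (1 + 1 / Real.sqrt N) *
        Real.sqrt (A₀ * (‖ytil 0‖ * ‖ptil 0‖ + ‖ytil T‖ * ‖ptil T‖)) := by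
  have hIcc : Set.uIcc (0:ℝ) T = Set.Icc 0 T := Set.uIcc_of_le hT.le
  have hyc : ContinuousOn ytil (Set.Icc 0 T) :=
    fun t ht => (hy t ht).continuousAt.continuousWithinAt
  have hpc : ContinuousOn ptil (Set.Icc 0 T) :=
    fun t ht => (hp t ht).continuousAt.continuousWithinAt
  set q : ℝ → ℝ := fun t => N * ‖ytil t‖^2 + ‖adjoint B (ptil t)‖^2 with hqdef
  have hqc : ContinuousOn q (Set.Icc 0 T) := by
    apply ContinuousOn.add
    · exact continuousOn_const.mul (hyc.norm.pow 2)
    · exact (((adjoint B).continuous.comp_continuousOn hpc).norm.pow 2)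
  -- derivative of the inner product
  have hderiv : ∀ t ∈ Set.Icc (0:ℝ) T,
      HasDerivAt (fun s => (inner ℝ (ytil s) (ptil s) : ℝ)) (-(q t)) t := by
    intro t ht
    have hd := HasDerivAt.inner (𝕜 := ℝ) (hy t ht) (hp t ht)
    convert hd using 1
    case e'_4 => rfl
    case e'_5 => rfl
    have e1 : (inner ℝ (ytil t) (adjoint A (ptil t)) : ℝ) = inner ℝ (A (ytil t)) (ptil t) :=
      adjoint_inner_right A (ytil t) (ptil t)
    have e2 : (inner ℝ (B (adjoint B (ptil t))) (ptil t) : ℝ)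
        = ‖adjoint B (ptil t)‖^2 := by
      rw [real_inner_comm, ← adjoint_inner_left, real_inner_self_eq_norm_sq]
    simp only [inner_sub_right, inner_neg_right, inner_smul_right, inner_add_left,
      map_neg, inner_neg_left, real_inner_self_eq_norm_sq, hqdef]
    rw [e1, e2]
    ring_nf
  set M : ℝ := ‖ytil 0‖ * ‖ptil 0‖ + ‖ytil T‖ * ‖ptil T‖ with hMdef
  have hM : 0 ≤ M := by positivity
  have hqint : IntervalIntegrable q MeasureTheory.volume 0 T :=
    (hqc.mono (by rw [hIcc])).intervalIntegrable
  have key : (∫ t in (0:ℝ)..T, q t) ≤ M := by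
    have hint : IntervalIntegrable (fun t => -(q t)) MeasureTheory.volume 0 T := hqint.neg
    have heq := intervalIntegral.integral_eq_sub_of_hasDerivAt
      (f := fun s => (inner ℝ (ytil s) (ptil s) : ℝ)) (f' := fun t => -(q t))
      (fun t ht => hderiv t (hIcc ▸ ht)) hint
    rw [intervalIntegral.integral_neg] at heq
    have hCS0 : (inner ℝ (ytil 0) (ptil 0) : ℝ) ≤ ‖ytil 0‖ * ‖ptil 0‖ := real_inner_le_norm _ _
    have hCST : -(inner ℝ (ytil T) (ptil T) : ℝ) ≤ ‖ytil T‖ * ‖ptil T‖ := by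
      have h1 := abs_real_inner_le_norm (ytil T) (ptil T)
      have h2 := neg_abs_le (inner ℝ (ytil T) (ptil T) : ℝ)
      linarith
    rw [hMdef]
    linarith
  have hqnonneg : 0 ≤ ∫ t in (0:ℝ)..T, q t := by
    apply intervalIntegral.integral_nonneg hT.le
    intro t _
    positivity
  -- LHS integrability
  have hlhsint : IntervalIntegrable
      (fun t => ‖ytil t‖ + ‖adjoint B (ptil t)‖) MeasureTheory.volume 0 T := by
    apply ContinuousOn.intervalIntegrable
    rw [hIcc]
    exact hyc.norm.add ((adjoint B).continuous.comp_continuousOn hpc).norm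
  -- main estimate via parametrized AM-GM
  have hmain : (∫ t in (0:ℝ)..T, (‖ytil t‖ + ‖adjoint B (ptil t)‖)) ≤
      2 * Real.sqrt ((M / 2) * (A₀ * (1/N + 1) / 2)) := by
    apply my_amgm_opt _ _ _ (by positivity) (by positivity)
    intro l hl
    have hpoint : ∀ t ∈ Set.Icc (0:ℝ) T,
        ‖ytil t‖ + ‖adjoint B (ptil t)‖ ≤ (l/2) * q t + (1/(2*(l*N)) + 1/(2*l)) := by
      intro t _
      have key1 : ‖ytil t‖ ≤ (l*N/2) * ‖ytil t‖^2 + 1/(2*(l*N)) := by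
        rw [← sub_le_iff_le_add', le_div_iff₀ (by positivity)]
        nlinarith [sq_nonneg (l*N*‖ytil t‖ - 1)]
      have key2 : ‖adjoint B (ptil t)‖ ≤ (l/2) * ‖adjoint B (ptil t)‖^2 + 1/(2*l) := by
        rw [← sub_le_iff_le_add', le_div_iff₀ (by positivity)]
        nlinarith [sq_nonneg (l*‖adjoint B (ptil t)‖ - 1)]
      have : (l/2) * q t = (l*N/2) * ‖ytil t‖^2 + (l/2) * ‖adjoint B (ptil t)‖^2 := by
        rw [hqdef]; ring
      rw [this]
      linarith
    have hrint : IntervalIntegrable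
        (fun t => (l/2) * q t + (1/(2*(l*N)) + 1/(2*l))) MeasureTheory.volume 0 T :=
      (hqint.const_mul _).add intervalIntegrable_const
    have hle := intervalIntegral.integral_mono_on hT.le hlhsint hrint hpoint
    rw [intervalIntegral.integral_add (hqint.const_mul _) intervalIntegrable_const,
      intervalIntegral.integral_const_mul, intervalIntegral.integral_const,
      smul_eq_mul, sub_zero] at hle
    have hstep : l/2 * ∫ t in (0:ℝ)..T, q t ≤ (M/2) * l := by
      have := mul_le_mul_of_nonneg_left key (by positivity : (0:ℝ) ≤ l/2)
      linarith
    have hstep2 : T * (1/(2*(l*N)) + 1/(2*l)) ≤ (A₀ * (1/N + 1) / 2) / l := by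
      have hc : 0 ≤ 1/(2*(l*N)) + 1/(2*l) := by positivity
      have h1 : T * (1/(2*(l*N)) + 1/(2*l)) ≤ A₀ * (1/(2*(l*N)) + 1/(2*l)) :=
        mul_le_mul_of_nonneg_right hTA hc
      have h2 : A₀ * (1/(2*(l*N)) + 1/(2*l)) = (A₀ * (1/N + 1) / 2) / l := by
        field_simp
      linarith
    calc (∫ t in (0:ℝ)..T, (‖ytil t‖ + ‖adjoint B (ptil t)‖))
        ≤ l/2 * (∫ t in (0:ℝ)..T, q t) + T * (1/(2*(l*N)) + 1/(2*l)) := hle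
      _ ≤ (M/2) * l + (A₀ * (1/N + 1) / 2) / l := by linarith
  -- simplify RHS of hmain and conclude
  have hsqrtN : 0 < Real.sqrt N := Real.sqrt_pos.2 hN
  have hre : 2 * Real.sqrt ((M / 2) * (A₀ * (1/N + 1) / 2))
      = Real.sqrt (A₀ * M) * Real.sqrt (1/N + 1) := by
    rw [show (M/2) * (A₀ * (1/N + 1) / 2) = (A₀ * M * (1/N + 1)) / 2^2 by ring,
      Real.sqrt_div (by positivity) (2^2 : ℝ), Real.sqrt_sq (by norm_num : (0:ℝ) ≤ 2)]
    rw [Real.sqrt_mul (by positivity : (0:ℝ) ≤ A₀ * M)]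
    field_simp
  have hfac : Real.sqrt (1/N + 1) ≤ 1 + 1 / Real.sqrt N := by
    rw [show (1:ℝ) + 1 / Real.sqrt N
        = Real.sqrt ((1 + 1/Real.sqrt N)^2) from
      (Real.sqrt_sq (by positivity)).symm]
    apply Real.sqrt_le_sqrt
    have : (1 / Real.sqrt N)^2 = 1/N := by
      rw [div_pow, one_pow, Real.sq_sqrt hN.le]
    have hs : 0 < 1 / Real.sqrt N := by positivity
    nlinarith [this, hs]
  have hfinal : Real.sqrt (A₀ * M) * Real.sqrt (1/N + 1)
      ≤ (1 + 1 / Real.sqrt N) * Real.sqrt (A₀ * M) := by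
    rw [mul_comm ((1:ℝ) + 1 / Real.sqrt N)]
    exact mul_le_mul_of_nonneg_left hfac (Real.sqrt_nonneg _)
  simp only [norm_neg]
  calc (∫ t in (0:ℝ)..T, (‖ytil t‖ + ‖adjoint B (ptil t)‖))
      ≤ 2 * Real.sqrt ((M / 2) * (A₀ * (1/N + 1) / 2)) := hmain
    _ = Real.sqrt (A₀ * M) * Real.sqrt (1/N + 1) := hre
    _ ≤ (1 + 1 / Real.sqrt N) * Real.sqrt (A₀ * M) := hfinal
end

section
/- Let H and U be real Hilbert spaces, let A : H → H and B : U → H be continuous linear maps, and let N be a real constant. Let ȳ, p̄, y_d ∈ H and v̄ ∈ U satisfy the steady-state relations A ȳ + B v̄ = 0 and A* p̄ + N·(ȳ − y_d) = 0. Let τ > 0 and let y : ℝ → H be differentiable with y'(t) = A y(t) + B v̄ for all t ∈ [0, τ]. Then ⟨y(0), p̄⟩ − ⟨y(τ), p̄⟩ + (N/2) ∫₀^τ ‖y(t) − ȳ‖² dt = (N/2) ∫₀^τ ( ‖y(t) − y_d‖² − ‖ȳ − y_d‖² ) dt. In particular, the system is strictly dissipative at (ȳ, v̄): the storage function S(y)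 = −⟨y, p̄⟩ satisfies a strict dissipation inequality with supply rate (N/2)(‖y − y_d‖² − ‖ȳ − y_d‖²) and dissipation rate α(s) = (N/2)s². -/
open ContinuousLinearMap
open scoped RealInnerProductSpace

variable {H : Type*} [NormedAddCommGroup H] [InnerProductSpace ℝ H] [CompleteSpace H]
variable {U : Type*} [NormedAddCommGroup U] [InnerProductSpace ℝ U] [CompleteSpace U]

/-- Strict dissipativity identity: if `A ȳ + B v̄ = 0` and `A* p̄ + N(ȳ − y_d) = 0`, then
along any trajectory of `y' = A y + B v̄` on `[0, τ]`,
`⟨y(0), p̄⟩ − ⟨y(τ), p̄⟩ + (N/2)∫₀^τ ‖y − ȳ‖² = (N/2)∫₀^τ (‖y − y_d‖² − ‖ȳ − y_d‖²)`. -/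
theorem stmt8 (A : H →L[ℝ] H) (B : U →L[ℝ] H) (N : ℝ)
    (ybar pbar yd : H) (vbar : U)
    (hsteady : A ybar + B vbar = 0)
    (hadj : adjoint A pbar + N • (ybar - yd) = 0)
    (τ : ℝ) (hτ : 0 < τ)
    (y : ℝ → H)
    (hy : ∀ t ∈ Set.Icc (0:ℝ) τ, HasDerivAt y (A (y t) + B vbar) t) :
    ⟪y 0, pbar⟫ - ⟪y τ, pbar⟫
        + N / 2 * (∫ t in (0:ℝ)..τ, ‖y t - ybar‖ ^ 2) =
      N / 2 * (∫ t in (0:ℝ)..τ, (‖y t - yd‖ ^ 2 - ‖ybar - yd‖ ^ 2)) := by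
  have hIcc : Set.uIcc (0:ℝ) τ = Set.Icc 0 τ := Set.uIcc_of_le hτ.le
  have hcont : ContinuousOn y (Set.Icc 0 τ) := fun t ht =>
    (hy t ht).continuousAt.continuousWithinAt
  -- value of the derivative of ⟪y t, pbar⟫
  have hval : ∀ t, ⟪A (y t) + B vbar, pbar⟫ = -(N * ⟪y t - ybar, ybar - yd⟫) := by
    intro t
    have e1 : A (y t) + B vbar = A (y t - ybar) := by
      rw [map_sub, eq_neg_of_add_eq_zero_left hsteady]; abel
    have e2 : adjoint A pbar = -(N • (ybar - yd)) := eq_neg_of_add_eq_zero_left hadj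
    rw [e1, ← ContinuousLinearMap.adjoint_inner_right, e2, inner_neg_right,
      real_inner_smul_right]
  have hderiv : ∀ t ∈ Set.uIcc (0:ℝ) τ,
      HasDerivAt (fun s => ⟪y s, pbar⟫) (-(N * ⟪y t - ybar, ybar - yd⟫)) t := by
    intro t ht
    rw [hIcc] at ht
    have h := (hy t ht).inner ℝ (hasDerivAt_const t pbar)
    simpa [hval t] using h
  have hgcont : ContinuousOn (fun t => ⟪y t - ybar, ybar - yd⟫) (Set.Icc 0 τ) := by
    exact (continuous_inner.comp_continuousOn ((hcont.sub continuousOn_const).prodMk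
      continuousOn_const))
  have hint : IntervalIntegrable (fun t => -(N * ⟪y t - ybar, ybar - yd⟫))
      MeasureTheory.volume 0 τ := by
    apply ContinuousOn.intervalIntegrable
    rw [hIcc]
    exact ((continuousOn_const.mul hgcont)).neg
  have key := intervalIntegral.integral_eq_sub_of_hasDerivAt hderiv hint
  -- key : ∫ -(N * g) = ⟪y τ, pbar⟫ - ⟪y 0, pbar⟫
  have hg : N * (∫ t in (0:ℝ)..τ, ⟪y t - ybar, ybar - yd⟫)
      = ⟪y 0, pbar⟫ - ⟪y τ, pbar⟫ := by
    rw [intervalIntegral.integral_neg, intervalIntegral.integral_const_mul] at key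
    linarith [key]
  -- pointwise identity
  have hpt : ∀ t, ‖y t - yd‖ ^ 2 - ‖ybar - yd‖ ^ 2
      = ‖y t - ybar‖ ^ 2 + 2 * ⟪y t - ybar, ybar - yd⟫ := by
    intro t
    have : y t - yd = (y t - ybar) + (ybar - yd) := by abel
    rw [this, norm_add_sq_real]; ring
  have hi1 : IntervalIntegrable (fun t => ‖y t - ybar‖ ^ 2) MeasureTheory.volume 0 τ := by
    apply ContinuousOn.intervalIntegrable
    rw [hIcc]
    exact ((hcont.sub continuousOn_const).norm.pow 2)
  have hi2 : IntervalIntegrable (fun t => 2 * ⟪y t - ybar, ybar - yd⟫)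
      MeasureTheory.volume 0 τ := by
    apply ContinuousOn.intervalIntegrable
    rw [hIcc]
    exact continuousOn_const.mul hgcont
  have hsplit : (∫ t in (0:ℝ)..τ, (‖y t - yd‖ ^ 2 - ‖ybar - yd‖ ^ 2))
      = (∫ t in (0:ℝ)..τ, ‖y t - ybar‖ ^ 2)
        + (∫ t in (0:ℝ)..τ, 2 * ⟪y t - ybar, ybar - yd⟫) := by
    rw [← intervalIntegral.integral_add hi1 hi2]
    exact intervalIntegral.integral_congr fun t _ => hpt t
  rw [hsplit, intervalIntegral.integral_const_mul]
  linarith [hg]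
end

section
/- Let H be a real Banach space and A : H → H a continuous linear map with ‖exp(tA)‖ ≤ M₀ e^{−νt} for all t ≥ 0, where M₀ > 0 and ν > 0. Let T > 0, N > 0, p_T ∈ H, C₁ ≥ 0, and let y : [0, T] → H be continuous with ‖y(s)‖ ≤ C₁ e^{−νs} for all s ∈ [0, T]. Define p(t) = exp((T−t)A) p_T + N ∫_t^T exp((s−t)A) (y(s)) ds for t ∈ [0, T]. Then for every t ∈ [0, T], ‖p(t)‖ ≤ M₀ e^{−ν(T−t)} ‖p_T‖ + (N M₀ C₁ / (2ν)) e^{−νt}. -/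
variable {H : Type*} [NormedAddCommGroup H] [NormedSpace ℝ H] [CompleteSpace H]

lemma exp_mul_integral (c a b : ℝ) (hc : c ≠ 0) :
    ∫ s in a..b, Real.exp (c * s) = (Real.exp (c * b) - Real.exp (c * a)) / c := by
  rw [intervalIntegral.integral_comp_mul_left (fun x => Real.exp x) hc, integral_exp,
    smul_eq_mul]
  field_simp

/-- Backward Duhamel estimate for the adjoint variable: if `‖exp(tA)‖ ≤ M₀ e^{−νt}` for
`t ≥ 0` and `‖y(s)‖ ≤ C₁ e^{−νs}` on `[0, T]`, then
`p(t) = exp((T−t)A) p_T + N ∫ₜᵀ exp((s−t)A) y(s) ds` satisfies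
`‖p(t)‖ ≤ M₀ e^{−ν(T−t)}‖p_T‖ + (N M₀ C₁/(2ν)) e^{−νt}` on `[0, T]`. -/
theorem stmt10 (A : H →L[ℝ] H) (M₀ ν : ℝ) (hM₀ : 0 < M₀) (hν : 0 < ν)
    (hA : ∀ t : ℝ, 0 ≤ t → ‖NormedSpace.exp (t • A)‖ ≤ M₀ * Real.exp (-ν * t))
    (T N : ℝ) (hT : 0 < T) (hN : 0 < N)
    (pT : H) (C₁ : ℝ) (hC₁ : 0 ≤ C₁)
    (y : ℝ → H) (hycont : ContinuousOn y (Set.Icc 0 T))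
    (hybound : ∀ s ∈ Set.Icc (0:ℝ) T, ‖y s‖ ≤ C₁ * Real.exp (-ν * s)) :
    ∀ t ∈ Set.Icc (0:ℝ) T,
      ‖NormedSpace.exp ((T - t) • A) pT
          + N • ∫ s in t..T, NormedSpace.exp ((s - t) • A) (y s)‖ ≤
        M₀ * Real.exp (-ν * (T - t)) * ‖pT‖
          + N * M₀ * C₁ / (2 * ν) * Real.exp (-ν * t) := by
  rintro t ⟨ht0, htT⟩
  have h2ν : (0:ℝ) < 2 * ν := by linarith
  have h1 : ‖NormedSpace.exp ((T - t) • A) pT‖ ≤ M₀ * Real.exp (-ν * (T - t)) * ‖pT‖ := by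
    calc ‖NormedSpace.exp ((T - t) • A) pT‖ ≤ ‖NormedSpace.exp ((T - t) • A)‖ * ‖pT‖ :=
          (NormedSpace.exp ((T - t) • A)).le_opNorm pT
      _ ≤ M₀ * Real.exp (-ν * (T - t)) * ‖pT‖ :=
          mul_le_mul_of_nonneg_right (hA _ (by linarith)) (norm_nonneg _)
  set g : ℝ → ℝ := fun s => M₀ * C₁ * Real.exp (ν * t) * Real.exp (-(2 * ν) * s) with hg
  have hgint : IntervalIntegrable g MeasureTheory.volume t T := by
    apply Continuous.intervalIntegrable
    continuity
  have hbd : ∀ᵐ s ∂(MeasureTheory.volume.restrict (Set.uIoc t T)),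
      ‖NormedSpace.exp ((s - t) • A) (y s)‖ ≤ g s := by
    refine MeasureTheory.ae_restrict_of_forall_mem measurableSet_uIoc ?_
    intro s hs
    rw [Set.uIoc_of_le htT] at hs
    have hst : t ≤ s := le_of_lt hs.1
    have hs0 : (0:ℝ) ≤ s := le_trans ht0 hst
    have hsT : s ≤ T := hs.2
    calc ‖NormedSpace.exp ((s - t) • A) (y s)‖
        ≤ ‖NormedSpace.exp ((s - t) • A)‖ * ‖y s‖ :=
          (NormedSpace.exp ((s - t) • A)).le_opNorm (y s)
      _ ≤ (M₀ * Real.exp (-ν * (s - t))) * (C₁ * Real.exp (-ν * s)) := by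
          apply mul_le_mul (hA _ (by linarith)) (hybound s ⟨hs0, hsT⟩) (norm_nonneg _)
          positivity
      _ = M₀ * C₁ * Real.exp ((-ν * (s - t)) + (-ν * s)) := by
          rw [Real.exp_add]; ring
      _ = g s := by
          rw [hg, show (-ν * (s - t)) + (-ν * s) = (ν * t) + (-(2 * ν) * s) from by ring,
            Real.exp_add]
          ring
  have hInt : ‖∫ s in t..T, NormedSpace.exp ((s - t) • A) (y s)‖ ≤ |∫ s in t..T, g s| :=
    intervalIntegral.norm_integral_le_abs_of_norm_le hbd hgint
  have hgval : ∫ s in t..T, g s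
      = M₀ * C₁ * Real.exp (ν * t) *
        ((Real.exp (-(2 * ν) * T) - Real.exp (-(2 * ν) * t)) / (-(2 * ν))) := by
    rw [hg]
    rw [intervalIntegral.integral_const_mul,
      exp_mul_integral _ _ _ (ne_of_lt (by linarith : -(2 * ν) < 0))]
  have hle : Real.exp (-(2 * ν) * T) ≤ Real.exp (-(2 * ν) * t) :=
    Real.exp_le_exp.mpr (by nlinarith)
  have hEt : Real.exp (ν * t) * Real.exp (-(2 * ν) * t) = Real.exp (-ν * t) := by
    rw [← Real.exp_add]; ring_nf
  have hnn : 0 ≤ M₀ * C₁ * Real.exp (ν * t) *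
      ((Real.exp (-(2 * ν) * t) - Real.exp (-(2 * ν) * T)) / (2 * ν)) := by
    apply mul_nonneg (by positivity)
    exact div_nonneg (by linarith) (by linarith)
  have habs : |∫ s in t..T, g s| ≤ M₀ * C₁ / (2 * ν) * Real.exp (-ν * t) := by
    rw [hgval, div_neg, ← neg_div, neg_sub, abs_of_nonneg hnn, ← mul_div_assoc,
      show M₀ * C₁ / (2 * ν) * Real.exp (-ν * t) = M₀ * C₁ * Real.exp (-ν * t) / (2 * ν)
        from by ring, div_le_div_iff₀ h2ν h2ν]
    have hkey : M₀ * C₁ * Real.exp (ν * t) * Real.exp (-(2 * ν) * t) * (2 * ν)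
        = M₀ * C₁ * Real.exp (-ν * t) * (2 * ν) := by
      rw [mul_assoc (M₀ * C₁), hEt]
    nlinarith [hkey, mul_nonneg (mul_nonneg (mul_nonneg (mul_nonneg hM₀.le hC₁)
      (Real.exp_pos (ν * t)).le) (Real.exp_pos (-(2 * ν) * T)).le) h2ν.le]
  calc ‖NormedSpace.exp ((T - t) • A) pT
          + N • ∫ s in t..T, NormedSpace.exp ((s - t) • A) (y s)‖
      ≤ ‖NormedSpace.exp ((T - t) • A) pT‖
          + ‖N • ∫ s in t..T, NormedSpace.exp ((s - t) • A) (y s)‖ := norm_add_le _ _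
    _ = ‖NormedSpace.exp ((T - t) • A) pT‖
          + N * ‖∫ s in t..T, NormedSpace.exp ((s - t) • A) (y s)‖ := by
        rw [norm_smul, Real.norm_eq_abs, abs_of_pos hN]
    _ ≤ M₀ * Real.exp (-ν * (T - t)) * ‖pT‖
          + N * (M₀ * C₁ / (2 * ν) * Real.exp (-ν * t)) :=
        add_le_add h1 (mul_le_mul_of_nonneg_left (hInt.trans habs) hN.le)
    _ = M₀ * Real.exp (-ν * (T - t)) * ‖pT‖
          + N * M₀ * C₁ / (2 * ν) * Real.exp (-ν * t) := by ring
end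

section
/- Let H and U be real Banach spaces, A : H → H and B : U → H continuous linear maps. For a locally Bochner-integrable function f : ℝ → U and t ≥ 0, define the input map Φ_t f = ∫₀^t exp((t−s)A) (B (f(s))) ds. For τ ≥ 0 and functions u, v : ℝ → U define the τ-concatenation (u ◇_τ v)(s) = u(s) if s < τ and (u ◇_τ v)(s) = v(s − τ) if s ≥ τ. Then for all 0 ≤ t ≤ T and all locally Bochner-integrable u, v : ℝ → U, Φ_T (u ◇_{T−t} v) = exp(tA) (Φ_{T−t} u) + Φ_t v. -/
set_option synthInstance.maxHeartbeats 1000000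
set_option maxHeartbeats 1000000


open MeasureTheory

variable {H : Type*} [NormedAddCommGroup H] [NormedSpace ℝ H] [CompleteSpace H]
variable {U : Type*} [NormedAddCommGroup U] [NormedSpace ℝ U]

/-- The input map `Φ_t f = ∫₀ᵗ exp((t−s)A) (B (f s)) ds`. -/
noncomputable def inputMap (A : H →L[ℝ] H) (B : U →L[ℝ] H) (t : ℝ) (f : ℝ → U) : H :=
  ∫ s in (0:ℝ)..t, NormedSpace.exp ((t - s) • A) (B (f s))

/-- The `τ`-concatenation of two controls: `(u ◇_τ v)(s) = u(s)` for `s < τ` and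
`(u ◇_τ v)(s) = v(s − τ)` for `s ≥ τ`. -/
noncomputable def concat (τ : ℝ) (u v : ℝ → U) : ℝ → U := fun s => if s < τ then u s else v (s - τ)

/-- Key integrability lemma: if `f` is interval integrable on `[a,b]`, then so is
`s ↦ exp((c−s)A) (B (f s))`. -/
lemma aux_intervalIntegrable (A : H →L[ℝ] H) (B : U →L[ℝ] H) {f : ℝ → U} {a b : ℝ}
    (hf : IntervalIntegrable f volume a b) (c : ℝ) :
    IntervalIntegrable (fun s => NormedSpace.exp ((c - s) • A) (B (f s))) volume a b := by
  have hBf : IntervalIntegrable (fun s => B (f s)) volume a b := by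
    rw [intervalIntegrable_iff] at hf ⊢
    exact B.integrable_comp hf
  rw [intervalIntegrable_iff] at hBf ⊢
  have hexp : Continuous fun s : ℝ => NormedSpace.exp ((c - s) • A) :=
    let +nondep : NormedAlgebra ℚ (H →L[ℝ] H) := .restrictScalars ℚ ℝ (H →L[ℝ] H)
    NormedSpace.exp_continuous.comp (by fun_prop)
  obtain ⟨C, hC⟩ := (isCompact_uIcc (a := a) (b := b)).exists_bound_of_continuousOn
    (hexp.continuousOn (s := Set.uIcc a b))
  have hmeas : AEStronglyMeasurable
      (fun s => NormedSpace.exp ((c - s) • A) (B (f s)))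
      (volume.restrict (Set.uIoc a b)) := by
    exact (ContinuousLinearMap.id ℝ (H →L[ℝ] H)).aestronglyMeasurable_comp₂
      (hexp.aestronglyMeasurable) hBf.aestronglyMeasurable
  refine Integrable.mono' (hBf.norm.const_mul C) hmeas ?_
  filter_upwards [ae_restrict_mem measurableSet_uIoc] with s hs
  calc ‖NormedSpace.exp ((c - s) • A) (B (f s))‖
      ≤ ‖NormedSpace.exp ((c - s) • A)‖ * ‖B (f s)‖ :=
        ContinuousLinearMap.le_opNorm _ _
    _ ≤ C * ‖B (f s)‖ :=
        mul_le_mul_of_nonneg_right (hC s (Set.uIoc_subset_uIcc hs)) (norm_nonneg _)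

/-- Composition property of input maps under concatenation of controls:
for `0 ≤ t ≤ T`, `Φ_T (u ◇_{T−t} v) = exp(tA) (Φ_{T−t} u) + Φ_t v`. -/
theorem stmt11 (A : H →L[ℝ] H) (B : U →L[ℝ] H) (u v : ℝ → U)
    (hu : MeasureTheory.LocallyIntegrable u MeasureTheory.volume)
    (hv : MeasureTheory.LocallyIntegrable v MeasureTheory.volume)
    (t T : ℝ) (ht : 0 ≤ t) (htT : t ≤ T) :
    inputMap A B T (concat (T - t) u v) =
      NormedSpace.exp (t • A) (inputMap A B (T - t) u) + inputMap A B t v := by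
  set τ := T - t with hτdef
  have hτ : 0 ≤ τ := sub_nonneg.mpr htT
  have hInt : ∀ (f : ℝ → U), LocallyIntegrable f volume → ∀ a b : ℝ,
      IntervalIntegrable f volume a b := fun f hf a b =>
    intervalIntegrable_iff.mpr
      ((hf.integrableOn_isCompact isCompact_uIcc).mono_set Set.uIoc_subset_uIcc)
  have hu' : IntervalIntegrable u volume 0 τ := hInt u hu 0 τ
  have hv' : IntervalIntegrable v volume 0 t := hInt v hv 0 t
  have hvs : IntervalIntegrable (fun s => v (s - τ)) volume τ T := by
    have := hv'.comp_sub_right τ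
    simpa [hτdef] using this
  -- a.e. equalities of the integrands on the two pieces
  have he1 : ∀ᵐ s ∂(volume : Measure ℝ), s ∈ Set.uIoc 0 τ →
      NormedSpace.exp ((T - s) • A) (B (concat τ u v s)) =
      NormedSpace.exp ((T - s) • A) (B (u s)) := by
    filter_upwards [compl_mem_ae_iff.mpr (measure_singleton τ)] with s hs hmem
    rw [Set.uIoc_of_le hτ] at hmem
    have : s < τ := lt_of_le_of_ne hmem.2 hs
    simp [concat, this]
  have he2 : ∀ᵐ s ∂(volume : Measure ℝ), s ∈ Set.uIoc τ T →
      NormedSpace.exp ((T - s) • A) (B (concat τ u v s)) =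
      NormedSpace.exp ((T - s) • A) (B (v (s - τ))) := by
    have hτT : τ ≤ T := by simp [hτdef, ht]
    filter_upwards with s hmem
    rw [Set.uIoc_of_le hτT] at hmem
    simp [concat, not_lt.mpr hmem.1.le]
  -- interval integrability of the full integrand on each piece
  have h1 : IntervalIntegrable
      (fun s => NormedSpace.exp ((T - s) • A) (B (concat τ u v s))) volume 0 τ := by
    rw [intervalIntegrable_iff]
    have he1' : (fun s => NormedSpace.exp ((T - s) • A) (B (concat τ u v s)))
        =ᵐ[volume.restrict (Set.uIoc 0 τ)]
        fun s => NormedSpace.exp ((T - s) • A) (B (u s)) :=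
      (ae_restrict_iff' measurableSet_uIoc).mpr he1
    exact (intervalIntegrable_iff.mp (aux_intervalIntegrable A B hu' T)).congr he1'.symm
  have h2 : IntervalIntegrable
      (fun s => NormedSpace.exp ((T - s) • A) (B (concat τ u v s))) volume τ T := by
    rw [intervalIntegrable_iff]
    have he2' : (fun s => NormedSpace.exp ((T - s) • A) (B (concat τ u v s)))
        =ᵐ[volume.restrict (Set.uIoc τ T)]
        fun s => NormedSpace.exp ((T - s) • A) (B (v (s - τ))) :=
      (ae_restrict_iff' measurableSet_uIoc).mpr he2
    exact (intervalIntegrable_iff.mp (aux_intervalIntegrable A B hvs T)).congr he2'.symm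
  -- split the integral
  rw [inputMap, ← intervalIntegral.integral_add_adjacent_intervals h1 h2]
  congr 1
  · -- first piece
    rw [intervalIntegral.integral_congr_ae he1]
    have hkey : ∀ s : ℝ, NormedSpace.exp ((T - s) • A) (B (u s)) =
        NormedSpace.exp (t • A) (NormedSpace.exp ((τ - s) • A) (B (u s))) := by
      intro s
      have hc : Commute (t • A) ((τ - s) • A) :=
        ((Commute.refl A).smul_left t).smul_right (τ - s)
      have : (T - s) • A = t • A + (τ - s) • A := by
        rw [← add_smul]; congr 1; simp [hτdef]; ring
      let +nondep instQ : NormedAlgebra ℚ (H →L[ℝ] H) := .restrictScalars ℚ ℝ (H →L[ℝ] H)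
      rw [this, NormedSpace.exp_add_of_commute hc, ContinuousLinearMap.mul_apply]
    simp_rw [hkey]
    rw [ContinuousLinearMap.intervalIntegral_comp_comm _
      (aux_intervalIntegrable A B hu' τ)]
    rfl
  · -- second piece
    rw [intervalIntegral.integral_congr_ae he2, inputMap]
    have := intervalIntegral.integral_comp_add_right (a := 0) (b := t)
      (fun s => NormedSpace.exp ((T - s) • A) (B (v (s - τ)))) τ
    rw [zero_add] at this
    have hTt : t + τ = T := by simp [hτdef]
    rw [hTt] at this
    rw [← this]
    refine intervalIntegral.integral_congr fun s _ => ?_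
    have h1 : s + τ - τ = s := by ring
    have h2 : T - (s + τ) = t - s := by simp [hτdef]; ring
    rw [h1, h2]
end
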